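/- Fix positive integers k and n, let λ be a partition contained in an n×k rectangle, p ∈ {0,1}, and set a_i = λ_i + (n-i) + (p+1)/2. Define the q-Catalan-triangle numbers 𝒞_{N,K}(q) = ([N-K+1]_q/[N+1]_q)·qbinom(N+K, K)_q for 0 ≤ K ≤ N (and 0 otherwise). Then det[ 𝒞_{2n-i-j+k+p+λ_j, j-i+k-λ_j}(q) ]_{i,j=1}^{n} = q^{‖λ̄‖} · (∏_{i=1}^{n} [2k+p+2i-2]_q! · [2a_i]_q) · (∏_{1≤i<j≤n} [a_i - a_j]_q [a_i + a_j]_q) / (∏_{i=1}^{n} [k+n-a_i+(p-1)/2]_q! · [k+n+a_i+(p-1)/2]_q!). -/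

import Mathlib

open Finset

noncomputable section

/-- The generic variable `q`, as a rational function over `ℚ`. -/
def q : RatFunc ℚ := RatFunc.X

/-- The `q`-integer `[m]_q`. -/
def qint (m : ℕ) : RatFunc ℚ := ∑ i ∈ Finset.range m, q ^ i

/-- The `q`-factorial `[m]_q!`. -/
def qfact (m : ℕ) : RatFunc ℚ := ∏ i ∈ Finset.range m, qint (i + 1)

/-- The Gaussian binomial coefficient, `0` outside the valid range. -/
def qbinom (a b : ℕ) : RatFunc ℚ :=
  if b ≤ a then qfact a / (qfact b * qfact (a - b)) else 0

/-- The `q`-Catalan-triangle number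
`𝒞_{N,K}(q) = ([N-K+1]_q/[N+1]_q) · qbinom(N+K, K)` for `0 ≤ K ≤ N`, `0` otherwise,
with an integer argument `K`. -/
def qcatZ (N : ℕ) (c : ℤ) : RatFunc ℚ :=
  if 0 ≤ c ∧ c ≤ (N : ℤ) then
    qint (N - c.toNat + 1) * qbinom (N + c.toNat) c.toNat / qint (N + 1)
  else 0

open Matrix

lemma q_ne_zero : q ≠ 0 := RatFunc.X_ne_zero
lemma q_pow_sub_one_ne (m : ℕ) (hm : 0 < m) : q ^ m - 1 ≠ 0 := by
  have h : q ^ m - 1 = algebraMap (Polynomial ℚ) (RatFunc ℚ) (Polynomial.X ^ m - 1) := by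
    simp [q, map_sub, map_pow, RatFunc.algebraMap_X]
  rw [h]
  intro h0
  have h2 : (Polynomial.X ^ m - 1 : Polynomial ℚ) = 0 :=
    RatFunc.algebraMap_injective ℚ (by simpa using h0)
  have h3 := Polynomial.X_pow_sub_C_ne_zero hm (1 : ℚ)
  simp only [_root_.map_one] at h3
  exact h3 h2
lemma q_sub_one_ne : q - 1 ≠ 0 := by simpa using q_pow_sub_one_ne 1 one_pos
lemma qint_mul (m : ℕ) : qint m * (q - 1) = q ^ m - 1 := geom_sum_mul q m
lemma qint_ne_zero {m : ℕ} (hm : 0 < m) : qint m ≠ 0 := by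
  intro h
  have h2 := qint_mul m
  rw [h, zero_mul] at h2
  exact q_pow_sub_one_ne m hm h2.symm
lemma qint_zero : qint 0 = 0 := by simp [qint]
lemma qfact_ne_zero (m : ℕ) : qfact m ≠ 0 := by
  rw [qfact]
  exact Finset.prod_ne_zero_iff.mpr (fun i _ => qint_ne_zero (Nat.succ_pos i))
lemma qfact_succ (m : ℕ) : qfact (m + 1) = qfact m * qint (m + 1) := Finset.prod_range_succ _ m
lemma qfact_add (m d : ℕ) : qfact (m + d) = qfact m * ∏ t ∈ Finset.range d, qint (m + t + 1) := by
  induction d with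
  | zero => simp [qfact]
  | succ d ih =>
    rw [← Nat.add_assoc, qfact, Finset.prod_range_succ, ← qfact, ih, Finset.prod_range_succ]
    rw [mul_assoc]
def zz (p b : ℕ) : RatFunc ℚ := (q ^ b)⁻¹ + q ^ (b + p + 1)
lemma zz_sub (p b c : ℕ) :
    q ^ (b + c) * (zz p (b + c) - zz p b)
      = (q - 1) ^ 2 * (qint c * qint (b + c + (b + p) + 1)) := by
  have h1 : (q - 1) ^ 2 * (qint c * qint (b + c + (b + p) + 1))
      = (qint c * (q - 1)) * (qint (b + c + (b + p) + 1) * (q - 1)) := by ring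
  rw [h1, qint_mul, qint_mul, zz, zz]
  have hb : (q : RatFunc ℚ) ^ b ≠ 0 := pow_ne_zero _ q_ne_zero
  have hbc : (q : RatFunc ℚ) ^ (b + c) ≠ 0 := pow_ne_zero _ q_ne_zero
  field_simp
  ring

/-- The entry factorization. -/
lemma entry_eq (n k p i j lj : ℕ) (hi : i < n) (hj : j < n) (hlj : lj ≤ k) :
    qcatZ (2 * n - 2 - i - j + k + p + lj) ((j : ℤ) - (i : ℕ) + k - (lj : ℤ))
      = (qint (2 * (lj + (n - 1 - j)) + p + 1)
          / (qfact (k + n - 1 - (lj + (n - 1 - j))) * qfact (k + n + (lj + (n - 1 - j)) + p)))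
        * (qfact (2 * (n - 1 - i) + 2 * k + p)
          * ∏ t ∈ Finset.range i,
              (qint (k + n - i + t - (lj + (n - 1 - j)))
                * qint (k + n - i + t + (lj + (n - 1 - j)) + p + 1))) := by
  set bj := lj + (n - 1 - j) with hbj
  by_cases hK : ((j : ℤ) - (i : ℕ) + k - (lj : ℤ)) < 0
  · rw [qcatZ, if_neg (by omega)]
    have hlt : bj - (k + n - i) < i := by omega
    rw [Finset.prod_eq_zero (Finset.mem_range.mpr hlt) (by
      have h0 : k + n - i + (bj - (k + n - i)) - bj = 0 := by omega
      rw [h0, qint_zero, zero_mul]), mul_zero, mul_zero]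
  · push_neg at hK
    have hle : i + lj ≤ j + k := by omega
    set Kn := j + k - (i + lj) with hKn
    set N := 2 * n - 2 - i - j + k + p + lj with hN
    have hcK : ((j : ℤ) - (i : ℕ) + k - (lj : ℤ)) = (Kn : ℤ) := by omega
    rw [qcatZ, if_pos (by omega), hcK, Int.toNat_natCast]
    have h1 : N - Kn + 1 = 2 * bj + p + 1 := by omega
    have h2 : N + Kn = 2 * (n - 1 - i) + 2 * k + p := by omega
    rw [h1, qbinom, if_pos (by omega), h2]
    have h3 : 2 * (n - 1 - i) + 2 * k + p - Kn = N := by omega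
    rw [h3]
    -- denominators via qfact_add
    have h4 : k + n - 1 - bj = Kn + i := by omega
    have h5 : k + n + bj + p = (N + 1) + i := by omega
    rw [h4, h5, qfact_add Kn i, qfact_add (N + 1) i, qfact_succ N]
    have h6 : ∀ t ∈ Finset.range i, qint (Kn + t + 1) = qint (k + n - i + t - bj) := by
      intro t ht
      rw [Finset.mem_range] at ht
      congr 1
      omega
    have h7 : ∀ t ∈ Finset.range i, qint (N + 1 + t + 1) = qint (k + n - i + t + bj + p + 1) := by
      intro t ht
      rw [Finset.mem_range] at ht
      congr 1
      omega
    rw [Finset.prod_congr rfl h6, Finset.prod_congr rfl h7, Finset.prod_mul_distrib]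
    have hKf := qfact_ne_zero Kn
    have hNf := qfact_ne_zero N
    have hN1 : qint (N + 1) ≠ 0 := qint_ne_zero (Nat.succ_pos N)
    have hP1 : (∏ t ∈ Finset.range i, qint (k + n - i + t - bj)) ≠ 0 := by
      rw [← Finset.prod_congr rfl h6]
      exact Finset.prod_ne_zero_iff.mpr (fun t _ => qint_ne_zero (Nat.succ_pos _))
    have hP2 : (∏ t ∈ Finset.range i, qint (k + n - i + t + bj + p + 1)) ≠ 0 :=
      Finset.prod_ne_zero_iff.mpr (fun t _ => qint_ne_zero (Nat.succ_pos _))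
    field_simp

lemma Hpoly (n k p i bj : ℕ) (hi : i < n) (hbj : bj ≤ k + n - 1) :
    ∏ t ∈ Finset.range i, (qint (k + n - i + t - bj) * qint (k + n - i + t + bj + p + 1))
      = ((-(((q - 1) ^ 2)⁻¹)) ^ i * ∏ t ∈ Finset.range i, q ^ (k + n - i + t))
        * ∏ t ∈ Finset.range i, (zz p bj - zz p (k + n - i + t)) := by
  have hs : ((q - 1 : RatFunc ℚ)) ^ 2 ≠ 0 := pow_ne_zero _ q_sub_one_ne
  by_cases hc : bj ≤ k + n - i
  · rw [← Finset.card_range i, ← Finset.prod_const (-(((q - 1 : RatFunc ℚ)) ^ 2)⁻¹),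
      Finset.card_range, ← Finset.prod_mul_distrib, ← Finset.prod_mul_distrib]
    apply Finset.prod_congr rfl
    intro t ht
    rw [Finset.mem_range] at ht
    have hA : bj ≤ k + n - i + t := le_trans hc (Nat.le_add_right _ _)
    obtain ⟨c0, hc0⟩ := Nat.exists_eq_add_of_le hA
    rw [hc0]
    have e1 : bj + c0 - bj = c0 := by omega
    have e2 : bj + c0 + bj + p + 1 = bj + c0 + (bj + p) + 1 := by omega
    rw [e1]
    have h := zz_sub p bj c0
    rw [← e2] at h
    linear_combination -((q - 1 : RatFunc ℚ) ^ 2)⁻¹ * h - (qint c0 * qint (bj + c0 + bj + p + 1)) * inv_mul_cancel₀ hs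
  · have hlt : bj - (k + n - i) < i := by omega
    rw [Finset.prod_eq_zero
        (f := fun t => qint (k + n - i + t - bj) * qint (k + n - i + t + bj + p + 1))
        (Finset.mem_range.mpr hlt) (by
      have h0 : k + n - i + (bj - (k + n - i)) - bj = 0 := by omega
      rw [h0, qint_zero, zero_mul])]
    rw [Finset.prod_eq_zero
        (f := fun t => zz p bj - zz p (k + n - i + t))
        (Finset.mem_range.mpr hlt) (by
      have h0 : k + n - i + (bj - (k + n - i)) = bj := by omega
      rw [h0, sub_self]), mul_zero]

lemma sum_sum_range (n : ℕ) (f : ℕ → ℕ) :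
    ∑ i ∈ range n, ∑ t ∈ range i, f t = ∑ t ∈ range n, (n - 1 - t) * f t := by
  induction n with
  | zero => simp
  | succ n ih =>
    rw [Finset.sum_range_succ, ih, Finset.sum_range_succ]
    have h0 : (n + 1 - 1 - n) * f n = 0 := by
      have e : n + 1 - 1 - n = 0 := by omega
      rw [e, Nat.zero_mul]
    rw [h0, Nat.add_zero, ← Finset.sum_add_distrib]
    apply Finset.sum_congr rfl
    intro t ht
    rw [Finset.mem_range] at ht
    have e : n + 1 - 1 - t = (n - 1 - t) + 1 := by omega
    rw [e, Nat.succ_mul]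

lemma key_sum (n k : ℕ) (l : Fin n → ℕ) (hbd : ∀ i, l i ≤ k) :
    ∑ i : Fin n, (∑ t ∈ Finset.range (i : ℕ), (k + n - (i : ℕ) + t))
      = (∑ i : Fin n, (i : ℕ) * (k - l i.rev))
        + ∑ i : Fin n, (l i + (n - 1 - (i : ℕ))) * (n - 1 - (i : ℕ)) := by
  have h1 : ∀ i : Fin n, ∑ t ∈ Finset.range (i:ℕ), (k + n - (i:ℕ) + t)
      = ∑ t ∈ Finset.range (i:ℕ), (k + n - 1 - t) := by
    intro i
    rw [← Finset.sum_range_reflect (fun t => k + n - 1 - t) (i:ℕ)]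
    apply Finset.sum_congr rfl
    intro t ht
    rw [Finset.mem_range] at ht
    have := i.isLt
    omega
  rw [Finset.sum_congr rfl (fun i _ => h1 i),
    Fin.sum_univ_eq_sum_range (fun i => ∑ t ∈ Finset.range i, (k + n - 1 - t)) n,
    sum_sum_range n (fun t => k + n - 1 - t)]
  have h2 : ∑ i : Fin n, (i : ℕ) * (k - l i.rev)
      = ∑ i : Fin n, (n - 1 - (i:ℕ)) * (k - l i) := by
    apply Fintype.sum_bijective Fin.rev Fin.rev_involutive.bijective
    intro x
    have hx := x.isLt
    have hv : ((Fin.rev x : Fin n) : ℕ) = n - ((x:ℕ) + 1) := rfl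
    rw [hv]
    congr 1
    omega
  rw [h2, ← Finset.sum_add_distrib]
  have h3 : ∀ i : Fin n, (n - 1 - (i:ℕ)) * (k - l i)
        + (l i + (n - 1 - (i:ℕ))) * (n - 1 - (i:ℕ))
      = (n - 1 - (i:ℕ)) * (k + n - 1 - (i:ℕ)) := by
    intro i
    have h4 := hbd i
    have h5 := i.isLt
    have e : k + n - 1 - (i:ℕ) = (k - l i) + (l i + (n - 1 - (i:ℕ))) := by omega
    rw [e, Nat.mul_add, Nat.mul_comm (l i + (n - 1 - (i:ℕ)))]
  rw [Finset.sum_congr rfl (fun i _ => h3 i),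
    Fin.sum_univ_eq_sum_range (fun t => (n - 1 - t) * (k + n - 1 - t)) n]

lemma S_eq (n k p : ℕ) (l : Fin n → ℕ) (hbd : ∀ i, l i ≤ k) :
    (∏ i : Fin n, ((-(((q - 1) ^ 2)⁻¹)) ^ (i:ℕ) * ∏ t ∈ Finset.range (i:ℕ), q ^ (k + n - (i:ℕ) + t)))
      * (∏ i : Fin n, (-((q ^ (l i + (n - 1 - (i:ℕ))))⁻¹ * (q - 1) ^ 2)) ^ (n - 1 - (i:ℕ)))
    = q ^ (∑ i : Fin n, (i : ℕ) * (k - l i.rev)) := by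
  have hs : ((q - 1 : RatFunc ℚ)) ^ 2 ≠ 0 := pow_ne_zero _ q_sub_one_ne
  -- expand powers of negatives and products
  have e1 : ∀ i : Fin n,
      ((-(((q - 1) ^ 2)⁻¹)) ^ (i:ℕ) * ∏ t ∈ Finset.range (i:ℕ), q ^ (k + n - (i:ℕ) + t))
      = ((-1) ^ (i:ℕ) * (((q - 1) ^ 2)⁻¹) ^ (i:ℕ))
          * q ^ (∑ t ∈ Finset.range (i:ℕ), (k + n - (i:ℕ) + t)) := by
    intro i
    rw [neg_pow, Finset.prod_pow_eq_pow_sum]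
  have e2 : ∀ i : Fin n,
      (-((q ^ (l i + (n - 1 - (i:ℕ))))⁻¹ * (q - 1) ^ 2)) ^ (n - 1 - (i:ℕ))
      = ((-1) ^ (n - 1 - (i:ℕ)) * ((q - 1) ^ 2) ^ (n - 1 - (i:ℕ)))
          * (q ^ ((l i + (n - 1 - (i:ℕ))) * (n - 1 - (i:ℕ))))⁻¹ := by
    intro i
    rw [neg_pow, mul_pow, ← inv_pow, ← pow_mul, inv_pow]
    ring
  rw [Finset.prod_congr rfl (fun i _ => e1 i), Finset.prod_congr rfl (fun i _ => e2 i),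
    Finset.prod_mul_distrib, Finset.prod_mul_distrib, Finset.prod_mul_distrib,
    Finset.prod_mul_distrib]
  -- now six products
  have hsign : (∏ i : Fin n, ((-1 : RatFunc ℚ)) ^ (i:ℕ))
      * (∏ i : Fin n, ((-1 : RatFunc ℚ)) ^ (n - 1 - (i:ℕ))) = 1 := by
    rw [← Finset.prod_mul_distrib]
    have e : ∀ i : Fin n, ((-1 : RatFunc ℚ)) ^ (i:ℕ) * ((-1 : RatFunc ℚ)) ^ (n - 1 - (i:ℕ))
        = ((-1 : RatFunc ℚ)) ^ (n - 1) := by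
      intro i
      rw [← pow_add]
      congr 1
      have := i.isLt
      omega
    rw [Finset.prod_congr rfl (fun i _ => e i), Finset.prod_const, Finset.card_univ,
      Fintype.card_fin, ← pow_mul]
    apply Even.neg_one_pow
    rcases Nat.even_or_odd n with h | h
    · exact h.mul_left _
    · exact ((Nat.Odd.sub_odd h odd_one).mul_right _)
  have hqm1 : (∏ i : Fin n, (((q - 1 : RatFunc ℚ) ^ 2)⁻¹) ^ (i:ℕ))
      * (∏ i : Fin n, ((q - 1 : RatFunc ℚ) ^ 2) ^ (n - 1 - (i:ℕ))) = 1 := by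
    have hrev : (∏ i : Fin n, ((q - 1 : RatFunc ℚ) ^ 2) ^ (n - 1 - (i:ℕ)))
        = ∏ i : Fin n, ((q - 1 : RatFunc ℚ) ^ 2) ^ (i:ℕ) := by
      apply Fintype.prod_bijective Fin.rev Fin.rev_involutive.bijective
      intro x
      have hx := x.isLt
      have hv : ((Fin.rev x : Fin n) : ℕ) = n - ((x:ℕ) + 1) := rfl
      rw [hv]
      congr 1
      omega
    rw [hrev, ← Finset.prod_mul_distrib]
    have e : ∀ i : Fin n, ((((q - 1 : RatFunc ℚ) ^ 2)⁻¹) ^ (i:ℕ))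
        * (((q - 1 : RatFunc ℚ) ^ 2) ^ (i:ℕ)) = 1 := by
      intro i
      rw [← mul_pow, inv_mul_cancel₀ hs, one_pow]
    rw [Finset.prod_congr rfl (fun i _ => e i), Finset.prod_const_one]
  have hqpow : (∏ i : Fin n, q ^ (∑ t ∈ Finset.range (i:ℕ), (k + n - (i:ℕ) + t)))
      * (∏ i : Fin n, (q ^ ((l i + (n - 1 - (i:ℕ))) * (n - 1 - (i:ℕ))))⁻¹)
      = q ^ (∑ i : Fin n, (i : ℕ) * (k - l i.rev)) := by
    rw [Finset.prod_pow_eq_pow_sum, Finset.prod_inv_distrib, Finset.prod_pow_eq_pow_sum,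
      key_sum n k l hbd, pow_add, mul_assoc,
      mul_inv_cancel₀ (pow_ne_zero _ q_ne_zero), mul_one]
  calc (∏ i : Fin n, ((-1 : RatFunc ℚ)) ^ (i:ℕ))
          * (∏ i : Fin n, (((q - 1 : RatFunc ℚ) ^ 2)⁻¹) ^ (i:ℕ))
          * (∏ i : Fin n, q ^ (∑ t ∈ Finset.range (i:ℕ), (k + n - (i:ℕ) + t)))
          * ((∏ i : Fin n, ((-1 : RatFunc ℚ)) ^ (n - 1 - (i:ℕ)))
              * (∏ i : Fin n, ((q - 1 : RatFunc ℚ) ^ 2) ^ (n - 1 - (i:ℕ)))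
              * (∏ i : Fin n, (q ^ ((l i + (n - 1 - (i:ℕ))) * (n - 1 - (i:ℕ))))⁻¹))
      = ((∏ i : Fin n, ((-1 : RatFunc ℚ)) ^ (i:ℕ))
          * (∏ i : Fin n, ((-1 : RatFunc ℚ)) ^ (n - 1 - (i:ℕ))))
        * ((∏ i : Fin n, (((q - 1 : RatFunc ℚ) ^ 2)⁻¹) ^ (i:ℕ))
          * (∏ i : Fin n, ((q - 1 : RatFunc ℚ) ^ 2) ^ (n - 1 - (i:ℕ))))
        * ((∏ i : Fin n, q ^ (∑ t ∈ Finset.range (i:ℕ), (k + n - (i:ℕ) + t)))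
          * (∏ i : Fin n, (q ^ ((l i + (n - 1 - (i:ℕ))) * (n - 1 - (i:ℕ))))⁻¹)) := by ring
    _ = q ^ (∑ i : Fin n, (i : ℕ) * (k - l i.rev)) := by
        rw [hsign, hqm1, hqpow, one_mul, one_mul]

lemma zz_pair (p bi bj : ℕ) (h : bj ≤ bi) :
    zz p bj - zz p bi
      = (-((q ^ bi)⁻¹ * (q - 1) ^ 2)) * (qint (bi - bj) * qint (bi + bj + p + 1)) := by
  obtain ⟨c, rfl⟩ := Nat.exists_eq_add_of_le h
  have h1 := zz_sub p bj c
  have e2 : bj + c + bj + p + 1 = bj + c + (bj + p) + 1 := by omega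
  rw [← e2] at h1
  rw [show bj + c - bj = c from by omega]
  have hq : (q : RatFunc ℚ) ^ (bj + c) ≠ 0 := pow_ne_zero _ q_ne_zero
  field_simp
  linear_combination -h1

lemma det_alternant {n : ℕ} (w : Fin n → ℕ → RatFunc ℚ) (v : Fin n → RatFunc ℚ) :
    Matrix.det (Matrix.of fun i j : Fin n => ∏ t ∈ Finset.range (i:ℕ), (v j - w i t))
      = ∏ i : Fin n, ∏ j ∈ Finset.Ioi i, (v j - v i) := by
  classical
  set P : Fin n → Polynomial (RatFunc ℚ) :=
    fun i => ∏ t ∈ Finset.range (i:ℕ), (Polynomial.X - Polynomial.C (w i t)) with hP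
  have hmonic : ∀ i, (P i).Monic := fun i =>
    Polynomial.monic_prod_of_monic _ _ (fun t _ => Polynomial.monic_X_sub_C _)
  have hdeg : ∀ i : Fin n, (P i).natDegree = i := by
    intro i
    rw [hP]
    simp only
    rw [Polynomial.natDegree_prod _ _ (fun t _ => Polynomial.X_sub_C_ne_zero _)]
    simp [Polynomial.natDegree_X_sub_C]
  have h1 := Matrix.det_eval_matrixOfPolynomials_eq_det_vandermonde v P hdeg hmonic
  have h2 : Matrix.of (fun i j : Fin n => ∏ t ∈ Finset.range (i:ℕ), (v j - w i t))
      = (Matrix.of fun i j : Fin n => ((P j).eval (v i)))ᵀ := by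
    ext i j
    simp [hP, Polynomial.eval_prod]
  rw [h2, Matrix.det_transpose, ← h1, Matrix.det_vandermonde]


/-- Type `BC` multiplicity formula: for `p ∈ {0,1}` and a partition `λ` inside an
`n × k` rectangle (`l i = λ_{i+1}`), with `a_i = λ_i + (n-i) + (p+1)/2` (writing
`b_i = λ_i + n - i` we have `2a_i = 2b_i + p + 1`, `a_i - a_j = b_i - b_j`,
`a_i + a_j = b_i + b_j + p + 1`, `k+n-a_i+(p-1)/2 = k - λ_i + i - 1` and
`k+n+a_i+(p-1)/2 = k+n+b_i+p`):
`det[ 𝒞_{2n-i-j+k+p+λ_j, j-i+k-λ_j}(q) ]_{i,j=1}^n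
  = q^{‖λ̄‖} ∏_i [2k+p+2i-2]! [2a_i] ∏_{i<j} [a_i-a_j][a_i+a_j]
      / ∏_i [k+n-a_i+(p-1)/2]! [k+n+a_i+(p-1)/2]!`. -/
theorem stmt5 (n k p : ℕ) (hp : p ≤ 1) (hn : 0 < n) (hk : 0 < k)
    (l : Fin n → ℕ)
    (hl : ∀ i j : Fin n, i ≤ j → l j ≤ l i) (hbd : ∀ i, l i ≤ k) :
    Matrix.det (Matrix.of fun i j : Fin n =>
        qcatZ (2 * n - 2 - (i : ℕ) - (j : ℕ) + k + p + l j)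
          ((j : ℤ) - (i : ℕ) + k - (l j : ℤ)))
      = q ^ (∑ i : Fin n, (i : ℕ) * (k - l i.rev))
        * (∏ i : Fin n, qfact (2 * k + p + 2 * (i : ℕ))
            * qint (2 * (l i + (n - 1 - (i : ℕ))) + p + 1))
        * (∏ i : Fin n, ∏ j ∈ Finset.Ioi i,
            qint ((l i + (n - 1 - (i : ℕ))) - (l j + (n - 1 - (j : ℕ))))
              * qint ((l i + (n - 1 - (i : ℕ))) + (l j + (n - 1 - (j : ℕ))) + p + 1))
        / (∏ i : Fin n,
            qfact (k - l i + (i : ℕ))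
              * qfact (k + 2 * n - 1 - (i : ℕ) + l i + p)) := by
  classical
  have hs : ((q - 1 : RatFunc ℚ)) ^ 2 ≠ 0 := pow_ne_zero _ q_sub_one_ne
  set v1 : Fin n → RatFunc ℚ := fun j =>
    qint (2 * (l j + (n - 1 - (j : ℕ))) + p + 1)
      / (qfact (k + n - 1 - (l j + (n - 1 - (j : ℕ)))) * qfact (k + n + (l j + (n - 1 - (j : ℕ))) + p)) with hv1
  set v2 : Fin n → RatFunc ℚ := fun i => qfact (2 * (n - 1 - (i : ℕ)) + 2 * k + p) with hv2
  set A1 : Matrix (Fin n) (Fin n) (RatFunc ℚ) := Matrix.of fun i j : Fin n =>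
    ∏ t ∈ Finset.range (i : ℕ),
      (qint (k + n - (i : ℕ) + t - (l j + (n - 1 - (j : ℕ))))
        * qint (k + n - (i : ℕ) + t + (l j + (n - 1 - (j : ℕ))) + p + 1)) with hA1
  have step1 : (Matrix.of fun i j : Fin n =>
        qcatZ (2 * n - 2 - (i : ℕ) - (j : ℕ) + k + p + l j)
          ((j : ℤ) - (i : ℕ) + k - (l j : ℤ)))
      = Matrix.of fun i j : Fin n => v1 j * (Matrix.of fun i j : Fin n => v2 i * A1 i j) i j := by
    ext i j
    show qcatZ _ _ = v1 j * (v2 i * A1 i j)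
    rw [hv1, hv2, hA1]
    exact entry_eq n k p (i : ℕ) (j : ℕ) (l j) i.isLt j.isLt (hbd j)
  rw [step1, Matrix.det_mul_row, Matrix.det_mul_column]
  set vr : Fin n → RatFunc ℚ := fun i =>
    (-(((q - 1) ^ 2)⁻¹)) ^ (i : ℕ) * ∏ t ∈ Finset.range (i : ℕ), q ^ (k + n - (i : ℕ) + t) with hvr
  set A2 : Matrix (Fin n) (Fin n) (RatFunc ℚ) := Matrix.of fun i j : Fin n =>
    ∏ t ∈ Finset.range (i : ℕ), (zz p (l j + (n - 1 - (j : ℕ))) - zz p (k + n - (i : ℕ) + t)) with hA2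
  have step2 : A1 = Matrix.of fun i j : Fin n => vr i * A2 i j := by
    ext i j
    show A1 i j = vr i * A2 i j
    rw [hA1, hvr, hA2]
    show (∏ t ∈ Finset.range (i : ℕ), _) = _
    have hj1 := j.isLt
    have hj2 := hbd j
    exact Hpoly n k p (i : ℕ) (l j + (n - 1 - (j : ℕ))) i.isLt (by omega)
  rw [step2, Matrix.det_mul_column]
  have step2b : Matrix.det A2 = ∏ i : Fin n, ∏ j ∈ Finset.Ioi i,
      (zz p (l j + (n - 1 - (j : ℕ))) - zz p (l i + (n - 1 - (i : ℕ)))) := by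
    rw [hA2]
    exact det_alternant (fun i t => zz p (k + n - (i : ℕ) + t)) (fun j => zz p (l j + (n - 1 - (j : ℕ))))
  rw [step2b]
  have step3 : (∏ i : Fin n, ∏ j ∈ Finset.Ioi i, (zz p (l j + (n - 1 - (j : ℕ))) - zz p (l i + (n - 1 - (i : ℕ)))))
      = (∏ i : Fin n, (-((q ^ (l i + (n - 1 - (i : ℕ))))⁻¹ * (q - 1) ^ 2)) ^ (n - 1 - (i : ℕ)))
        * ∏ i : Fin n, ∏ j ∈ Finset.Ioi i,
            (qint ((l i + (n - 1 - (i : ℕ))) - (l j + (n - 1 - (j : ℕ)))) * qint ((l i + (n - 1 - (i : ℕ))) + (l j + (n - 1 - (j : ℕ))) + p + 1)) := by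
    rw [← Finset.prod_mul_distrib]
    apply Finset.prod_congr rfl
    intro i _
    calc ∏ j ∈ Finset.Ioi i, (zz p (l j + (n - 1 - (j : ℕ))) - zz p (l i + (n - 1 - (i : ℕ))))
        = ∏ j ∈ Finset.Ioi i, ((-((q ^ (l i + (n - 1 - (i : ℕ))))⁻¹ * (q - 1) ^ 2))
            * (qint ((l i + (n - 1 - (i : ℕ))) - (l j + (n - 1 - (j : ℕ)))) * qint ((l i + (n - 1 - (i : ℕ))) + (l j + (n - 1 - (j : ℕ))) + p + 1))) := by
          apply Finset.prod_congr rfl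
          intro j hj
          have hij : i < j := Finset.mem_Ioi.mp hj
          have hij2 : (i : ℕ) < (j : ℕ) := hij
          have h5 := hl i j (le_of_lt hij)
          have h6 := j.isLt
          exact zz_pair p (l i + (n - 1 - (i : ℕ))) (l j + (n - 1 - (j : ℕ))) (by omega)
      _ = (-((q ^ (l i + (n - 1 - (i : ℕ))))⁻¹ * (q - 1) ^ 2)) ^ (Finset.Ioi i).card
            * ∏ j ∈ Finset.Ioi i,
                (qint ((l i + (n - 1 - (i : ℕ))) - (l j + (n - 1 - (j : ℕ)))) * qint ((l i + (n - 1 - (i : ℕ))) + (l j + (n - 1 - (j : ℕ))) + p + 1)) := by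
          rw [Finset.prod_mul_distrib, Finset.prod_const]
      _ = (-((q ^ (l i + (n - 1 - (i : ℕ))))⁻¹ * (q - 1) ^ 2)) ^ (n - 1 - (i : ℕ))
            * ∏ j ∈ Finset.Ioi i,
                (qint ((l i + (n - 1 - (i : ℕ))) - (l j + (n - 1 - (j : ℕ)))) * qint ((l i + (n - 1 - (i : ℕ))) + (l j + (n - 1 - (j : ℕ))) + p + 1)) := by
          rw [Fin.card_Ioi]
  rw [step3]
  -- unfold local abbreviations
  rw [hv1, hv2, hvr]
  rw [Finset.prod_div_distrib]
  have hRf : (∏ i : Fin n, qfact (2 * (n - 1 - (i : ℕ)) + 2 * k + p))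
      = ∏ i : Fin n, qfact (2 * k + p + 2 * (i : ℕ)) := by
    apply Fintype.prod_bijective Fin.rev Fin.rev_involutive.bijective
    intro x
    have hx := x.isLt
    have hv : ((Fin.rev x : Fin n) : ℕ) = n - ((x : ℕ) + 1) := rfl
    rw [hv]
    congr 1
    omega
  have hDq : (∏ j : Fin n, (qfact (k + n - 1 - (l j + (n - 1 - (j : ℕ)))) * qfact (k + n + (l j + (n - 1 - (j : ℕ))) + p)))
      = ∏ i : Fin n, (qfact (k - l i + (i : ℕ)) * qfact (k + 2 * n - 1 - (i : ℕ) + l i + p)) := by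
    apply Finset.prod_congr rfl
    intro i _
    have h7 := hbd i
    have h8 := i.isLt
    congr 2 <;> omega
  rw [hRf, hDq]
  have hsplit : (∏ i : Fin n, qfact (2 * k + p + 2 * (i : ℕ))
        * qint (2 * (l i + (n - 1 - (i : ℕ))) + p + 1))
      = (∏ i : Fin n, qfact (2 * k + p + 2 * (i : ℕ)))
        * (∏ i : Fin n, qint (2 * (l i + (n - 1 - (i : ℕ))) + p + 1)) :=
    Finset.prod_mul_distrib
  rw [hsplit, ← S_eq n k p l hbd]
  ring

end
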